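/- (de Silva's weak witness theorem, edge case in dimension 1) Let L ⊂ R be a finite set of at least two points and p, q ∈ L distinct. If each of the simplices {p}, {q}, and {p,q} has a weak witness in R, then {p,q} has a strong witness in R. -/
import Mathlib


def IsWeakWitness (L σ : Finset ℝ) (x : ℝ) : Prop :=
  ∀ a ∈ σ, ∀ b ∈ L, b ∉ σ → |x - a| ≤ |x - b|

def IsStrongWitness (L σ : Finset ℝ) (x : ℝ) : Prop :=
  IsWeakWitness L σ x ∧ ∀ a ∈ σ, ∀ b ∈ σ, |x - a| = |x - b|

/-- de Silva's weak witness theorem, edge case in dimension 1. -/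
theorem weak_witness_edge_dim1 (L : Finset ℝ) (hL : 2 ≤ L.card)
    (p q : ℝ) (hp : p ∈ L) (hq : q ∈ L) (hpq : p ≠ q)
    (hwp : ∃ x : ℝ, IsWeakWitness L {p} x)
    (hwq : ∃ x : ℝ, IsWeakWitness L {q} x)
    (hwpq : ∃ x : ℝ, IsWeakWitness L {p, q} x) :
    ∃ x : ℝ, IsStrongWitness L {p, q} x := by
  obtain ⟨x, hx⟩ := hwpq
  set m : ℝ := (p + q) / 2 with hm
  have sym : |m - p| = |m - q| := by
    rw [show m - p = (q - p) / 2 by rw [hm]; ring,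
      show m - q = -((q - p) / 2) by rw [hm]; ring, abs_neg]
  have key : ∀ b ∈ L, b ∉ ({p, q} : Finset ℝ) → |m - p| ≤ |m - b| := by
    intro b hb hbn
    have h1 := hx p (by simp) b hb hbn
    have h2 := hx q (by simp) b hb hbn
    rcases abs_cases (x - p) with ⟨e1, _⟩ | ⟨e1, _⟩ <;>
    rcases abs_cases (x - q) with ⟨e2, _⟩ | ⟨e2, _⟩ <;>
    rcases abs_cases (x - b) with ⟨e3, _⟩ | ⟨e3, _⟩ <;>
    rcases abs_cases (m - p) with ⟨f1, _⟩ | ⟨f1, _⟩ <;>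
    rcases abs_cases (m - b) with ⟨f2, _⟩ | ⟨f2, _⟩ <;>
    rw [f1, f2] <;> rw [e1] at h1 <;> rw [e2] at h2 <;> rw [e3] at h1 h2 <;>
    simp only [hm] at * <;> linarith
  refine ⟨m, ?_, ?_⟩
  · intro a ha b hb hbn
    have ha' : a = p ∨ a = q := by simpa using ha
    rcases ha' with rfl | rfl
    · exact key b hb hbn
    · exact sym ▸ key b hb hbn
  · intro a ha b hb
    have ha' : a = p ∨ a = q := by simpa using ha
    have hb' : b = p ∨ b = q := by simpa using hb
    rcases ha' with rfl | rfl <;> rcases hb' with rfl | rfl <;>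
      first | rfl | exact sym | exact sym.symm
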